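/- Let k₁, k₂ be positive integers with k₂² > k₁² + 3π² and k₂² − k₁² ≠ (2n+1)π² for all integers n. Then there exists t₀ > k₂² such that √(t₀−k₁²)·cot(√(t₀−k₁²)) = √(t₀−k₂²)·cot(√(t₀−k₂²)), with both sides well-defined (the arguments of cot are not multiples of π). -/

import Mathlib

open Real Set

lemma not_int_mul_pi_aux {y : ℝ} {n : ℕ} (h1 : (n : ℝ) * Real.pi < y)
    (h2 : y < ((n : ℝ) + 1) * Real.pi) : ∀ m : ℤ, y ≠ (m : ℝ) * Real.pi := by
  intro m hm
  rcases le_or_gt m (n : ℤ) with h | h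
  · have hc : (m : ℝ) ≤ (n : ℝ) := by exact_mod_cast h
    have : (m : ℝ) * Real.pi ≤ (n : ℝ) * Real.pi :=
      mul_le_mul_of_nonneg_right hc Real.pi_pos.le
    rw [hm] at h1; linarith
  · have hc : ((n : ℝ) + 1) ≤ (m : ℝ) := by exact_mod_cast h
    have : ((n : ℝ) + 1) * Real.pi ≤ (m : ℝ) * Real.pi :=
      mul_le_mul_of_nonneg_right hc Real.pi_pos.le
    rw [hm] at h2; linarith

lemma sin_ne_zero_aux {y : ℝ} {n : ℕ} (h1 : (n : ℝ) * Real.pi < y)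
    (h2 : y < ((n : ℝ) + 1) * Real.pi) : Real.sin y ≠ 0 := by
  intro h
  obtain ⟨m, hm⟩ := Real.sin_eq_zero_iff.1 h
  exact not_int_mul_pi_aux h1 h2 m hm.symm

set_option maxHeartbeats 1000000 in
/-- For positive integers `k₁, k₂` with `k₂² > k₁² + 3π²` and `k₂² − k₁² ≠ (2n+1)π²` for
all integers `n`, there exists `t₀ > k₂²` where the two trigonometric dispersion curves meet,
with both arguments of `cot` avoiding multiples of `π`. -/
theorem exists_t0_two_dim (k₁ k₂ : ℕ) (hk₁ : 0 < k₁) (hk₂ : 0 < k₂)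
    (hgap : (k₁ : ℝ) ^ 2 + 3 * Real.pi ^ 2 < (k₂ : ℝ) ^ 2)
    (hodd : ∀ n : ℤ, (k₂ : ℝ) ^ 2 - (k₁ : ℝ) ^ 2 ≠ (2 * (n : ℝ) + 1) * Real.pi ^ 2) :
    ∃ t₀ : ℝ, (k₂ : ℝ) ^ 2 < t₀ ∧
      (∀ m : ℤ, Real.sqrt (t₀ - (k₁ : ℝ) ^ 2) ≠ (m : ℝ) * Real.pi) ∧
      (∀ m : ℤ, Real.sqrt (t₀ - (k₂ : ℝ) ^ 2) ≠ (m : ℝ) * Real.pi) ∧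
      Real.sqrt (t₀ - (k₁ : ℝ) ^ 2) *
          (Real.cos (Real.sqrt (t₀ - (k₁ : ℝ) ^ 2)) / Real.sin (Real.sqrt (t₀ - (k₁ : ℝ) ^ 2))) =
        Real.sqrt (t₀ - (k₂ : ℝ) ^ 2) *
          (Real.cos (Real.sqrt (t₀ - (k₂ : ℝ) ^ 2)) / Real.sin (Real.sqrt (t₀ - (k₂ : ℝ) ^ 2))) := by
  have hπ := Real.pi_pos
  have hπ2 : (0 : ℝ) < Real.pi ^ 2 := by positivity
  set D : ℝ := (k₂ : ℝ) ^ 2 - (k₁ : ℝ) ^ 2 with hDdef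
  have hD3 : 3 * Real.pi ^ 2 < D := by rw [hDdef]; linarith
  set r : ℝ := D / Real.pi ^ 2 with hrdef
  have hDr : D = r * Real.pi ^ 2 := by rw [hrdef, div_mul_cancel₀ _ hπ2.ne']
  have hr3 : 3 < r := by
    rw [hrdef, lt_div_iff₀ hπ2]; linarith
  set n : ℕ := ⌊(r - 1) / 2⌋₊ with hndef
  have hfl : (n : ℝ) ≤ (r - 1) / 2 := Nat.floor_le (by linarith)
  have hfl2 : (r - 1) / 2 < (n : ℝ) + 1 := Nat.lt_floor_add_one _
  have hn1 : 1 ≤ n := Nat.le_floor (by push_cast; linarith)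
  have hn1' : (1 : ℝ) ≤ (n : ℝ) := by exact_mod_cast hn1
  have hrlo : 2 * (n : ℝ) + 1 ≤ r := by linarith
  have hrhi : r < 2 * (n : ℝ) + 3 := by linarith
  have hrne : r ≠ 2 * (n : ℝ) + 1 := by
    intro h
    apply hodd (n : ℤ)
    rw [hDr, h]
    push_cast
    ring
  have hlo : (2 * (n : ℝ) + 1) * Real.pi ^ 2 < D := by
    rw [hDr]
    have : 2 * (n : ℝ) + 1 < r := lt_of_le_of_ne hrlo (Ne.symm hrne)
    nlinarith
  have hhi : D < (2 * (n : ℝ) + 3) * Real.pi ^ 2 := by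
    rw [hDr]; nlinarith
  set a : ℝ := (n : ℝ) * Real.pi with hadef
  set b : ℝ := ((n : ℝ) + 1) * Real.pi with hbdef
  have hab : a ≤ b := by
    rw [hadef, hbdef]
    have : (n : ℝ) ≤ (n : ℝ) + 1 := by linarith
    exact mul_le_mul_of_nonneg_right this hπ.le
  -- bounds on the first argument
  have hybound : ∀ x ∈ Icc a b,
      ((n : ℝ) + 1) * Real.pi < Real.sqrt (x ^ 2 + D) ∧
      Real.sqrt (x ^ 2 + D) < ((n : ℝ) + 2) * Real.pi := by
    intro x hx
    have hx1 : a ≤ x := hx.1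
    have hx2 : x ≤ b := hx.2
    have hapos : 0 < a := by rw [hadef]; exact mul_pos (by linarith) hπ
    have hxpos : 0 < x := lt_of_lt_of_le hapos hx1
    have hxsq1 : a ^ 2 ≤ x ^ 2 := by nlinarith
    have hxsq2 : x ^ 2 ≤ b ^ 2 := by nlinarith
    have e : (((n : ℝ) + 1) * Real.pi) ^ 2 = a ^ 2 + (2 * (n : ℝ) + 1) * Real.pi ^ 2 := by
      rw [hadef]; ring
    have e' : (((n : ℝ) + 2) * Real.pi) ^ 2 = b ^ 2 + (2 * (n : ℝ) + 3) * Real.pi ^ 2 := by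
      rw [hbdef]; ring
    constructor
    · rw [Real.lt_sqrt (by positivity), e]
      linarith
    · rw [Real.sqrt_lt' (by positivity), e']
      linarith
  have hsinne : ∀ x ∈ Icc a b, Real.sin (Real.sqrt (x ^ 2 + D)) ≠ 0 := by
    intro x hx
    obtain ⟨h1, h2⟩ := hybound x hx
    have h1' : ((n + 1 : ℕ) : ℝ) * Real.pi < Real.sqrt (x ^ 2 + D) := by push_cast; linarith
    have h2' : Real.sqrt (x ^ 2 + D) < (((n + 1 : ℕ) : ℝ) + 1) * Real.pi := by push_cast; linarith
    exact sin_ne_zero_aux h1' h2'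
  set G : ℝ → ℝ := fun x => Real.sqrt (x ^ 2 + D) *
      (Real.cos (Real.sqrt (x ^ 2 + D)) / Real.sin (Real.sqrt (x ^ 2 + D))) * Real.sin x
      - x * Real.cos x with hGdef
  have hc1 : Continuous fun x : ℝ => Real.sqrt (x ^ 2 + D) :=
    ((continuous_pow 2).add continuous_const).sqrt
  have hcont : ContinuousOn G (Icc a b) := by
    apply ContinuousOn.sub
    · apply ContinuousOn.mul
      · apply ContinuousOn.mul hc1.continuousOn
        exact ContinuousOn.div (Real.continuous_cos.comp hc1).continuousOn
          (Real.continuous_sin.comp hc1).continuousOn hsinne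
      · exact Real.continuous_sin.continuousOn
    · exact (continuous_id.mul Real.continuous_cos).continuousOn
  have hGa : G a = -((n : ℝ) * Real.pi) * (-1) ^ n := by
    have hs : Real.sin a = 0 := by rw [hadef]; exact Real.sin_nat_mul_pi n
    have hc : Real.cos a = (-1) ^ n := by
      have := Real.cos_nat_mul_pi_sub 0 n
      simpa [hadef] using this
    simp [hGdef, hs, hc]
    exact hadef
  have hGb : G b = ((n : ℝ) + 1) * Real.pi * (-1) ^ n := by
    have hs : Real.sin b = 0 := by
      have := Real.sin_nat_mul_pi (n + 1)
      rw [hbdef]; push_cast at this ⊢; linarith [this]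
    have hc : Real.cos b = (-1) ^ (n + 1) := by
      have := Real.cos_nat_mul_pi_sub 0 (n + 1)
      rw [hbdef]
      push_cast at this ⊢
      simpa using this
    rw [hGdef]
    simp only [hs, hc]
    rw [pow_succ]
    ring
  have hnπpos : 0 < (n : ℝ) * Real.pi := by positivity
  have hn1πpos : 0 < ((n : ℝ) + 1) * Real.pi := by positivity
  -- IVT
  have key : ∃ x₀ ∈ Ioo a b, G x₀ = 0 := by
    rcases Nat.even_or_odd n with he | ho
    · have hpow : (-1 : ℝ) ^ n = 1 := he.neg_one_pow
      have hGa' : G a < 0 := by rw [hGa, hpow]; linarith [hnπpos]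
      have hGb' : 0 < G b := by rw [hGb, hpow]; linarith [hn1πpos]
      have := intermediate_value_Ioo hab hcont (Set.mem_Ioo.2 ⟨hGa', hGb'⟩)
      obtain ⟨x₀, hx₀, hGx₀⟩ := this
      exact ⟨x₀, hx₀, hGx₀⟩
    · have hpow : (-1 : ℝ) ^ n = -1 := ho.neg_one_pow
      have hGa' : 0 < G a := by rw [hGa, hpow]; linarith [hnπpos]
      have hGb' : G b < 0 := by rw [hGb, hpow]; linarith [hn1πpos]
      have := intermediate_value_Ioo' hab hcont (Set.mem_Ioo.2 ⟨hGb', hGa'⟩)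
      obtain ⟨x₀, hx₀, hGx₀⟩ := this
      exact ⟨x₀, hx₀, hGx₀⟩
  obtain ⟨x₀, hx₀mem, hGx₀⟩ := key
  have hx₀a : a < x₀ := hx₀mem.1
  have hx₀b : x₀ < b := hx₀mem.2
  have hx₀pos : 0 < x₀ := lt_trans hnπpos hx₀a
  refine ⟨(k₂ : ℝ) ^ 2 + x₀ ^ 2, by nlinarith, ?_, ?_, ?_⟩
  all_goals
    have e2 : (k₂ : ℝ) ^ 2 + x₀ ^ 2 - (k₂ : ℝ) ^ 2 = x₀ ^ 2 := by ring
    have e1 : (k₂ : ℝ) ^ 2 + x₀ ^ 2 - (k₁ : ℝ) ^ 2 = x₀ ^ 2 + D := by rw [hDdef]; ring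
    have hmemIcc : x₀ ∈ Icc a b := ⟨hx₀a.le, hx₀b.le⟩
    obtain ⟨hy1, hy2⟩ := hybound x₀ hmemIcc
  · rw [e1]
    intro m
    have h1' : ((n + 1 : ℕ) : ℝ) * Real.pi < Real.sqrt (x₀ ^ 2 + D) := by push_cast; linarith
    have h2' : Real.sqrt (x₀ ^ 2 + D) < (((n + 1 : ℕ) : ℝ) + 1) * Real.pi := by push_cast; linarith
    exact not_int_mul_pi_aux h1' h2' m
  · rw [e2, Real.sqrt_sq hx₀pos.le]
    intro m
    exact not_int_mul_pi_aux (by rw [hadef] at hx₀a; exact hx₀a) (by rw [hbdef] at hx₀b; exact hx₀b) m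
  · rw [e1, e2, Real.sqrt_sq hx₀pos.le]
    have hsx : Real.sin x₀ ≠ 0 :=
      sin_ne_zero_aux (by rw [hadef] at hx₀a; exact hx₀a) (by rw [hbdef] at hx₀b; exact hx₀b)
    have hsA : Real.sin (Real.sqrt (x₀ ^ 2 + D)) ≠ 0 := hsinne x₀ hmemIcc
    rw [hGdef] at hGx₀
    simp only at hGx₀
    field_simp at hGx₀ ⊢
    linarith [hGx₀]
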